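/- Let e ≥ 1, V = R((z)) ⊂ W = R((z^{1/e})) for a C-algebra R, and let ḡ be a continuous R-algebra automorphism of W of the form ḡ(z^{1/e}) = z^{1/e}·u(z^{1/e}) with u invertible, such that ḡ restricts to an automorphism g of V. Then for all w ∈ W one has tr(ḡ(w)) = g(tr(w)); i.e., ḡ commutes with the trace map tr: W → V. -/

import Mathlib

open HahnSeries

/-- The embedding `R((z)) → R((z^{1/e}))`, modelled as the ring homomorphism
`R((z)) → R((t))` sending `z ↦ t^e` (where `t` plays the role of `z^{1/e}`),
i.e. rescaling exponents by `e`.  Here the ring of formal Laurent series `R((z))`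
is `HahnSeries ℤ R` (Mathlib's `LaurentSeries R`). -/
noncomputable def rootEmb (R : Type*) [CommRing R] (e : ℕ) (he : 0 < e) :
    HahnSeries ℤ R →+* HahnSeries ℤ R :=
  HahnSeries.embDomainRingHom (AddMonoidHom.mulLeft (e : ℤ))
    (fun a b hab => by
      have h : (e : ℤ) * a = (e : ℤ) * b := hab
      exact mul_left_cancel₀ (by exact_mod_cast he.ne') h)
    (fun a b => by
      show (e : ℤ) * a ≤ (e : ℤ) * b ↔ a ≤ b
      exact mul_le_mul_iff_of_pos_left (by exact_mod_cast he))

/-- The image `V = R((z)) ⊆ W = R((z^{1/e}))` of the above embedding, as a subring: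
the series supported on exponents divisible by `e`. -/
noncomputable def rootSub (R : Type*) [CommRing R] (e : ℕ) (he : 0 < e) :
    Subring (HahnSeries ℤ R) :=
  (rootEmb R e he).range


/-- Let `V = R((z)) ⊂ W = R((z^{1/e}))` for a ℂ-algebra `R`, and let `ḡ`
be an `R`-algebra automorphism of `W` of the form `ḡ(z^{1/e}) = z^{1/e}·u` with `u`
invertible, which restricts to an automorphism `g` of `V`.  Then `tr(ḡ(w)) = g(tr(w))`
for all `w ∈ W`, i.e. `ḡ` commutes with the trace map `tr : W → V`.  (Since `g` is the
restriction of `ḡ` to `V`, the right-hand side is expressed by applying `ḡ`.) -/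
theorem trace_comm_of_restricts
    (R : Type*) [CommRing R] [Algebra ℂ R] (e : ℕ) (he : 0 < e)
    (gbar : HahnSeries ℤ R ≃ₐ[R] HahnSeries ℤ R)
    (u : HahnSeries ℤ R) (hu : IsUnit u)
    (hform : gbar (HahnSeries.single 1 1) = HahnSeries.single 1 1 * u)
    (hV : ∀ w : HahnSeries ℤ R, w ∈ rootSub R e he ↔ gbar w ∈ rootSub R e he) :
    ∀ w : HahnSeries ℤ R,
      ((Algebra.trace (rootSub R e he) (HahnSeries ℤ R) (gbar w) :
          rootSub R e he) : HahnSeries ℤ R)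
        = gbar ((Algebra.trace (rootSub R e he) (HahnSeries ℤ R) w :
            rootSub R e he) : HahnSeries ℤ R) := by
  intro w
  -- the restriction `g` of `gbar` to `V = rootSub R e he`
  set V := rootSub R e he with hVdef
  let g : V ≃+* V :=
    { toFun := fun x => ⟨gbar x, (hV x).1 x.2⟩
      invFun := fun x => ⟨gbar.symm x, by
        have : gbar (gbar.symm (x : HahnSeries ℤ R)) ∈ V := by
          simpa using x.2
        exact (hV _).2 this⟩
      left_inv := fun x => by
        ext; simp
      right_inv := fun x => by
        ext; simp
      map_mul' := fun x y => by
        ext; simp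
      map_add' := fun x y => by
        ext; simp }
  have key := Algebra.trace_eq_of_equiv_equiv (A₁ := V) (B₁ := HahnSeries ℤ R)
    (A₂ := V) (B₂ := HahnSeries ℤ R) g (gbar : HahnSeries ℤ R ≃+* HahnSeries ℤ R)
    (by ext x; rfl) w
  have key' : g (Algebra.trace V (HahnSeries ℤ R) w)
      = Algebra.trace V (HahnSeries ℤ R) (gbar w) := by
    rw [key]; simp
  calc ((Algebra.trace V (HahnSeries ℤ R) (gbar w) : V) : HahnSeries ℤ R)
      = ((g (Algebra.trace V (HahnSeries ℤ R) w) : V) : HahnSeries ℤ R) := by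
        rw [key']
    _ = gbar ((Algebra.trace V (HahnSeries ℤ R) w : V) : HahnSeries ℤ R) := rfl
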